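/- Let A be a symmetrizable indecomposable hyperbolic generalized Cartan matrix of rank n ≥ 4. Then every proper 2×2 principal submatrix A|_{i,j} (i ≠ j) is of finite type; equivalently, A i j · A j i ≤ 3 for all i ≠ j. -/

import Mathlib

/-- An integer matrix is a generalized Cartan matrix (GCM). -/
def IsGCM {ι : Type} (A : Matrix ι ι ℤ) : Prop :=
  (∀ i, A i i = 2) ∧ (∀ i j, i ≠ j → A i j ≤ 0) ∧ (∀ i j, A i j = 0 → A j i = 0)

/-- A GCM is symmetrizable if there are nonzero rationals `d i` with
`d i * A i j = d j * A j i` for all `i, j`. -/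
def IsSymmetrizable {ι : Type} (A : Matrix ι ι ℤ) : Prop :=
  ∃ d : ι → ℚ, (∀ i, d i ≠ 0) ∧ ∀ i j, d i * (A i j : ℚ) = d j * (A j i : ℚ)

/-- The Dynkin diagram graph of a GCM: `i` adjacent to `j` iff `i ≠ j` and `A i j ≠ 0`.
(For a GCM, `A i j ≠ 0 ↔ A j i ≠ 0`, so adjacency is stated symmetrically.) -/
def dynkinGraph {ι : Type} (A : Matrix ι ι ℤ) : SimpleGraph ι where
  Adj i j := i ≠ j ∧ A i j ≠ 0 ∧ A j i ≠ 0
  symm := by constructor; intro i j h; exact ⟨h.1.symm, h.2.2, h.2.1⟩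
  loopless := by constructor; intro i h; exact h.1 rfl

/-- The principal submatrix of `A` with rows and columns in `S`. -/
def matSub {ι : Type} (A : Matrix ι ι ℤ) (S : Finset ι) : Matrix S S ℤ :=
  fun i j => A i.1 j.1

/-- A GCM is of finite type if all of its principal minors are positive. -/
def IsFiniteType {ι : Type} [Fintype ι] [DecidableEq ι] (A : Matrix ι ι ℤ) : Prop :=
  ∀ S : Finset ι, 0 < (matSub A S).det

/-- An indecomposable GCM is of affine type if its determinant is `0` and all proper
principal minors are positive (i.e. every proper principal submatrix is of finite type). -/
def IsAffineType {ι : Type} [Fintype ι] [DecidableEq ι] (A : Matrix ι ι ℤ) : Prop :=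
  (dynkinGraph A).Connected ∧ A.det = 0 ∧
    ∀ S : Finset ι, S ≠ Finset.univ → 0 < (matSub A S).det

/-- An indecomposable GCM of rank at least 3 is hyperbolic if it is of neither finite nor
affine type, but every proper connected principal submatrix is of finite or affine type. -/
def IsHyperbolic {ι : Type} [Fintype ι] [DecidableEq ι] (A : Matrix ι ι ℤ) : Prop :=
  3 ≤ Fintype.card ι ∧ (dynkinGraph A).Connected ∧
  ¬ IsFiniteType A ∧ ¬ IsAffineType A ∧
  ∀ S : Finset ι, S ≠ Finset.univ →
    ((dynkinGraph A).induce (S : Set ι)).Connected →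
    (IsFiniteType (matSub A S) ∨ IsAffineType (matSub A S))

/-- A hyperbolic GCM is of compact hyperbolic type if every proper connected principal
submatrix is of finite type. -/
def IsCompactHyperbolic {ι : Type} [Fintype ι] [DecidableEq ι] (A : Matrix ι ι ℤ) : Prop :=
  IsHyperbolic A ∧ ∀ S : Finset ι, S ≠ Finset.univ →
    ((dynkinGraph A).induce (S : Set ι)).Connected → IsFiniteType (matSub A S)

lemma det_matSub_empty {ι : Type} [DecidableEq ι] (A : Matrix ι ι ℤ) :
    (matSub A ∅).det = 1 := by
  haveI : IsEmpty ((∅ : Finset ι) : Type) := by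
    simp [Finset.isEmpty_coe_sort]
    exact ⟨fun x => x.2⟩
  exact Matrix.det_isEmpty

lemma det_matSub_singleton {ι : Type} [DecidableEq ι] (A : Matrix ι ι ℤ) (a : ι) :
    (matSub A {a}).det = A a a := by
  have ha : a ∈ ({a} : Finset ι) := Finset.mem_singleton_self a
  let e : Fin 1 ≃ (({a} : Finset ι) : Type) :=
    { toFun := fun _ => ⟨a, ha⟩
      invFun := fun _ => 0
      left_inv := by intro x; fin_cases x; rfl
      right_inv := by
        intro x
        exact Subtype.ext (Finset.mem_singleton.mp x.2).symm }
  rw [← Matrix.det_submatrix_equiv_self e (matSub A {a}), Matrix.det_fin_one]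
  rfl

lemma det_matSub_pair {ι : Type} [DecidableEq ι] (A : Matrix ι ι ℤ) {a b : ι} (hab : a ≠ b) :
    (matSub A {a, b}).det = A a a * A b b - A a b * A b a := by
  have ha : a ∈ ({a, b} : Finset ι) := by simp
  have hb : b ∈ ({a, b} : Finset ι) := by simp
  let e : Fin 2 ≃ (({a, b} : Finset ι) : Type) :=
    { toFun := ![⟨a, ha⟩, ⟨b, hb⟩]
      invFun := fun x => if x.1 = a then 0 else 1
      left_inv := by
        intro x
        fin_cases x <;> simp [hab.symm]
      right_inv := by
        intro x
        rcases Finset.mem_insert.mp x.2 with h | h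
        · have : x = ⟨a, ha⟩ := Subtype.ext h
          simp [this, h]
        · have h' := Finset.mem_singleton.mp h
          have : x.1 ≠ a := by rw [h']; exact hab.symm
          have hx : x = ⟨b, hb⟩ := Subtype.ext h'
          simp [this, hx, hab.symm] }
  rw [← Matrix.det_submatrix_equiv_self e (matSub A {a, b}), Matrix.det_fin_two]
  simp [e, matSub, Matrix.submatrix]

/-- In a symmetrizable indecomposable hyperbolic GCM of rank `n ≥ 4`, every proper `2 × 2`
principal submatrix is of finite type; equivalently, `A i j * A j i ≤ 3` for `i ≠ j`. -/
theorem rank_ge_four_two_by_two_finite {n : ℕ} (hn : 4 ≤ n)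
    (A : Matrix (Fin n) (Fin n) ℤ) (hA : IsGCM A) (hsym : IsSymmetrizable A)
    (hhyp : IsHyperbolic A) :
    ∀ i j : Fin n, i ≠ j →
      IsFiniteType (matSub A {i, j}) ∧ A i j * A j i ≤ 3 := by
  intro i j hij
  obtain ⟨hdiag, hoff, hzero⟩ := hA
  have hple : A i j * A j i ≤ 3 := by
    by_contra hcon
    push_neg at hcon
    have hij0 : A i j ≠ 0 := by
      intro h
      rw [h, zero_mul] at hcon
      omega
    have hji0 : A j i ≠ 0 := fun h => hij0 (hzero j i h)
    have hadj : (dynkinGraph A).Adj i j := ⟨hij, hij0, hji0⟩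
    -- find a vertex outside {i, j}
    obtain ⟨v, hv⟩ : ∃ v : Fin n, v ∉ ({i, j} : Finset (Fin n)) := by
      by_contra h
      push_neg at h
      have hsub : (Finset.univ : Finset (Fin n)) ⊆ {i, j} := fun x _ => h x
      have h1 := Finset.card_le_card hsub
      have h2 : ({i, j} : Finset (Fin n)).card ≤ 2 := Finset.card_insert_le i {j}
      simp [Finset.card_univ] at h1
      omega
    -- find a boundary dart from outside {i,j} into {i,j}
    obtain ⟨w⟩ := (hhyp.2.1.preconnected v i).symm.symm
    have hvS : v ∈ ((↑({i, j} : Finset (Fin n)) : Set (Fin n)))ᶜ := by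
      simpa using hv
    have hiS : i ∉ ((↑({i, j} : Finset (Fin n)) : Set (Fin n)))ᶜ := by
      simp
    obtain ⟨d, -, hd1, hd2⟩ := w.exists_boundary_dart _ hvS hiS
    set k := d.fst with hkdef
    have hk : k ∉ ({i, j} : Finset (Fin n)) := by simpa using hd1
    rw [Set.notMem_compl_iff] at hd2
    have hsnd : d.snd ∈ ({i, j} : Finset (Fin n)) := Finset.mem_coe.mp hd2
    have hkadj : (dynkinGraph A).Adj k d.snd := d.adj
    have hki : k ≠ i := fun h => hk (by simp [h])
    have hkj : k ≠ j := fun h => hk (by simp [h])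
    -- the subset T = {i, j, k}
    set T : Finset (Fin n) := {i, j, k} with hTdef
    have hiT : i ∈ T := by simp [hTdef]
    have hjT : j ∈ T := by simp [hTdef]
    have hkT : k ∈ T := by simp [hTdef]
    have hTne : T ≠ Finset.univ := by
      intro h
      have h1 : T.card ≤ 3 := by
        calc T.card ≤ ({j, k} : Finset (Fin n)).card + 1 := Finset.card_insert_le _ _
        _ ≤ (({k} : Finset (Fin n)).card + 1) + 1 := by
              have := Finset.card_insert_le j ({k} : Finset (Fin n))
              omega
        _ = 3 := by simp
      rw [h] at h1
      simp [Finset.card_univ] at h1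
      omega
    -- connectivity of the induced subgraph on T
    have hconn : ((dynkinGraph A).induce ((T : Finset (Fin n)) : Set (Fin n))).Connected := by
      have hiT' : i ∈ ((T : Finset (Fin n)) : Set (Fin n)) := by simpa using hiT
      haveI : Nonempty (((T : Finset (Fin n)) : Set (Fin n))) := ⟨⟨i, hiT'⟩⟩
      constructor
      intro u w'
      have key : ∀ u : ((T : Finset (Fin n)) : Set (Fin n)),
          ((dynkinGraph A).induce ((T : Finset (Fin n)) : Set (Fin n))).Reachable u ⟨i, hiT'⟩ := by
        intro u
        have hu : u.1 ∈ T := by simpa using u.2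
        have hadjsub : ∀ (x y : Fin n) (hx : x ∈ ((T : Finset (Fin n)) : Set (Fin n)))
            (hy : y ∈ ((T : Finset (Fin n)) : Set (Fin n))), (dynkinGraph A).Adj x y →
            ((dynkinGraph A).induce ((T : Finset (Fin n)) : Set (Fin n))).Adj ⟨x, hx⟩ ⟨y, hy⟩ := by
          intro x y hx hy h
          exact h
        rcases Finset.mem_insert.mp hu with h | h
        · have : u = ⟨i, hiT'⟩ := Subtype.ext h
          rw [this]
        · rcases Finset.mem_insert.mp h with h | h
          · have hjT' : j ∈ ((T : Finset (Fin n)) : Set (Fin n)) := by simpa using hjT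
            have : u = ⟨j, hjT'⟩ := Subtype.ext (by simpa using h)
            rw [this]
            exact (hadjsub j i hjT' hiT' hadj.symm).reachable
          · have hkT' : k ∈ ((T : Finset (Fin n)) : Set (Fin n)) := by simpa using hkT
            have hu' : u = ⟨k, hkT'⟩ := Subtype.ext (by simpa using h)
            rw [hu']
            rcases Finset.mem_insert.mp hsnd with h2 | h2
            · have : (dynkinGraph A).Adj k i := h2 ▸ hkadj
              exact (hadjsub k i hkT' hiT' this).reachable
            · have h2' : d.snd = j := Finset.mem_singleton.mp h2
              have hkj' : (dynkinGraph A).Adj k j := h2' ▸ hkadj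
              have hjT' : j ∈ ((T : Finset (Fin n)) : Set (Fin n)) := by simpa using hjT
              exact ((hadjsub k j hkT' hjT' hkj').reachable).trans
                (hadjsub j i hjT' hiT' hadj.symm).reachable
      exact (key u).trans (key w').symm
    -- apply hyperbolicity
    have hfa := hhyp.2.2.2.2 T hTne hconn
    -- the (i,j) principal minor inside T
    have haijT : (⟨i, hiT⟩ : T) ≠ ⟨j, hjT⟩ := fun h => hij (congrArg Subtype.val h)
    have hdet : (matSub (matSub A T) {⟨i, hiT⟩, ⟨j, hjT⟩}).det
        = A i i * A j j - A i j * A j i := det_matSub_pair (matSub A T) haijT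
    have hne : ({⟨i, hiT⟩, ⟨j, hjT⟩} : Finset T) ≠ Finset.univ := by
      intro h
      have : (⟨k, hkT⟩ : T) ∈ ({⟨i, hiT⟩, ⟨j, hjT⟩} : Finset T) := h ▸ Finset.mem_univ _
      rcases Finset.mem_insert.mp this with h2 | h2
      · exact hki (congrArg Subtype.val h2)
      · exact hkj (congrArg Subtype.val (Finset.mem_singleton.mp h2))
    have hpos : 0 < (matSub (matSub A T) {⟨i, hiT⟩, ⟨j, hjT⟩}).det := by
      rcases hfa with hf | ha
      · exact hf _
      · exact ha.2.2 _ hne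
    rw [hdet, hdiag i, hdiag j] at hpos
    omega
  refine ⟨?_, hple⟩
  -- finite type of the 2×2 submatrix
  intro S
  have ha : i ∈ ({i, j} : Finset (Fin n)) := by simp
  have hb : j ∈ ({i, j} : Finset (Fin n)) := by simp
  set a : (({i, j} : Finset (Fin n)) : Type) := ⟨i, ha⟩ with hadef
  set b : (({i, j} : Finset (Fin n)) : Type) := ⟨j, hb⟩ with hbdef
  have hab : a ≠ b := fun h => hij (congrArg Subtype.val h)
  have hmem : ∀ x : (({i, j} : Finset (Fin n)) : Type), x = a ∨ x = b := by
    intro x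
    rcases Finset.mem_insert.mp x.2 with h | h
    · exact Or.inl (Subtype.ext h)
    · exact Or.inr (Subtype.ext (Finset.mem_singleton.mp h))
  have hS : S = ∅ ∨ S = {a} ∨ S = {b} ∨ S = {a, b} := by
    by_cases haS : a ∈ S <;> by_cases hbS : b ∈ S
    · refine Or.inr (Or.inr (Or.inr ?_))
      apply Finset.ext
      intro x
      rcases hmem x with h | h <;> subst h <;> simp [haS, hbS]
    · refine Or.inr (Or.inl ?_)
      apply Finset.ext
      intro x
      rcases hmem x with h | h <;> subst h <;> simp [haS, hbS, hab, Ne.symm hab]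
    · refine Or.inr (Or.inr (Or.inl ?_))
      apply Finset.ext
      intro x
      rcases hmem x with h | h <;> subst h <;> simp [haS, hbS, hab, Ne.symm hab]
    · refine Or.inl ?_
      apply Finset.ext
      intro x
      rcases hmem x with h | h <;> subst h <;> simp [haS, hbS]
  have hAii : A i i = 2 := hdiag i
  have hAjj : A j j = 2 := hdiag j
  rcases hS with h | h | h | h <;> subst h
  · rw [det_matSub_empty]; omega
  · rw [det_matSub_singleton]
    show (0 : ℤ) < A i i
    omega
  · rw [det_matSub_singleton]
    show (0 : ℤ) < A j j
    omega
  · rw [det_matSub_pair _ hab]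
    show (0 : ℤ) < A i i * A j j - A i j * A j i
    rw [hAii, hAjj]
    omega
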